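/- Let D be an invariant metric on the product group (ℤ × ℤ) × ℤ such that D((a,b,0),(0,0,0)) = |a| + |b| for all a,b ∈ ℤ. Then for all integers m, n: |m| + |n| ≤ |m| · D((1,0,0),(0,0,n)) + |n| · D((0,1,0),(0,0,m)). -/
import Mathlib


/-- If `D` is an invariant metric on `(ℤ × ℤ) × ℤ` whose restriction to
`ℤ² × {0}` is the ℓ¹ norm, then for all integers `m, n`:
`|m| + |n| ≤ |m| · D(e₁, cⁿ) + |n| · D(e₂, cᵐ)`, where `e₁ = ((1,0),0)`, `e₂ = ((0,1),0)`
and `cᵏ = ((0,0),k)`. -/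
theorem l1_lower_bound_for_invariant_extension
    (D : (ℤ × ℤ) × ℤ → (ℤ × ℤ) × ℤ → ℝ)
    (hnonneg : ∀ x y, 0 ≤ D x y)
    (hzero : ∀ x y, D x y = 0 ↔ x = y)
    (hsymm : ∀ x y, D x y = D y x)
    (htri : ∀ x y z, D x z ≤ D x y + D y z)
    (hinv : ∀ a x y, D (a + x) (a + y) = D x y)
    (hext : ∀ a b : ℤ, D ((a, b), 0) ((0, 0), 0) = |(a : ℝ)| + |(b : ℝ)|) :
    ∀ m n : ℤ,
      (|m| : ℝ) + (|n| : ℝ) ≤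
        (|m| : ℝ) * D ((1, 0), 0) ((0, 0), n) + (|n| : ℝ) * D ((0, 1), 0) ((0, 0), m) := by
  -- D of difference
  have hsub : ∀ x y : (ℤ × ℤ) × ℤ, D (x - y) 0 = D x y := by
    intro x y
    have := hinv (-y) x y
    simpa [sub_eq_add_neg, add_comm] using this
  have hneg : ∀ x : (ℤ × ℤ) × ℤ, D (-x) 0 = D x 0 := by
    intro x
    have h1 := hinv x (-x) 0
    simp at h1
    rw [← h1]
    exact hsymm _ _
  have hnat : ∀ (k : ℕ) (x : (ℤ × ℤ) × ℤ), D (k • x) 0 ≤ (k : ℝ) * D x 0 := by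
    intro k x
    induction k with
    | zero => simp [(hzero 0 0).2 rfl]
    | succ k ih =>
      have h1 : D ((k + 1) • x) 0 ≤ D ((k + 1) • x) (k • x) + D (k • x) 0 := htri _ _ _
      have h2 : D ((k + 1) • x) (k • x) = D x 0 := by
        rw [succ_nsmul]
        have := hinv (k • x) x 0
        rwa [add_zero] at this
      push_cast
      calc D ((k + 1) • x) 0 ≤ D x 0 + D (k • x) 0 := by rw [h2] at h1; linarith
        _ ≤ D x 0 + (k : ℝ) * D x 0 := by linarith
        _ = ((k : ℝ) + 1) * D x 0 := by ring
  have hint : ∀ (k : ℤ) (x : (ℤ × ℤ) × ℤ), D (k • x) 0 ≤ (|k| : ℝ) * D x 0 := by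
    intro k x
    have base := hnat k.natAbs x
    have habs : (|k| : ℝ) = (k.natAbs : ℝ) := by
      rw [Nat.cast_natAbs, Int.cast_abs]
    rcases Int.natAbs_eq k with h | h
    · have e : k • x = k.natAbs • x := by rw [← natCast_zsmul, ← h]
      rw [e, habs]; exact base
    · have e : k • x = -(k.natAbs • x) := by
        rw [← natCast_zsmul, ← neg_smul, ← h]
      rw [e, hneg, habs]; exact base
  intro m n
  set u : (ℤ × ℤ) × ℤ := ((1, 0), 0) - ((0, 0), n) with hu
  set v : (ℤ × ℤ) × ℤ := ((0, 1), 0) - ((0, 0), m) with hv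
  have key : m • u - n • v = ((m, -n), 0) := by
    simp [hu, hv, Prod.ext_iff, smul_sub]
    ring
  have h1 : D (m • u - n • v) 0 = |(m : ℝ)| + |((-n : ℤ) : ℝ)| := by
    rw [key]; exact hext m (-n)
  have h2 : D (m • u - n • v) 0 = D (m • u) (n • v) := hsub _ _
  have h3 : D (m • u) (n • v) ≤ D (m • u) 0 + D 0 (n • v) := htri _ _ _
  have h4 : D 0 (n • v) = D (n • v) 0 := hsymm _ _
  have h5 := hint m u
  have h6 := hint n v
  have hDu : D u 0 = D ((1, 0), 0) ((0, 0), n) := hsub _ _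
  have hDv : D v 0 = D ((0, 1), 0) ((0, 0), m) := hsub _ _
  rw [hDu] at h5
  rw [hDv] at h6
  have habs : |((-n : ℤ) : ℝ)| = (|n| : ℝ) := by push_cast; rw [abs_neg]
  have hm : |(m : ℝ)| = (|m| : ℝ) := by push_cast; ring
  rw [habs, hm] at h1
  linarith [h1, h2, h3, h5, h6, h4.symm ▸ h3]
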